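/- For all integers 1 ≤ p ≤ q ≤ n, the minimum number of edges in an n × n bipartite graph that is weakly K_{p,q}-saturated equals n^2 − (n−p+1)^2 + (q−p)^2. -/

import Mathlib

/-- `S`, `T` span a copy of `K_{p,q}`, with the side of size `p` in either
class. -/
def IsKpq (p q : ℕ) {n : ℕ} (S T : Finset (Fin n)) : Prop :=
  (S.card = p ∧ T.card = q) ∨ (S.card = q ∧ T.card = p)

/-- An `n × n` bipartite graph, given by its edge set
`E ⊆ X × Y = Fin n × Fin n`, is weakly `K_{p,q}`-saturated if its non-edges
can be ordered as a list `l` so that adding them one at a time, each newly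
added edge lies in a copy of `K_{p,q}` (in either orientation) all of whose
edges are already present. -/
def WeakSatBip (n p q : ℕ) (E : Finset (Fin n × Fin n)) : Prop :=
  ∃ l : List (Fin n × Fin n), l.Nodup ∧ (∀ e, e ∈ l ↔ e ∉ E) ∧
    ∀ k : Fin l.length, ∃ S T : Finset (Fin n),
      IsKpq p q S T ∧ l.get k ∈ S ×ˢ T ∧
      (S ×ˢ T : Finset (Fin n × Fin n)) ⊆ E ∪ (l.take (k + 1)).toFinset

/-- `W_n(p,q)`: the minimum number of edges of a weakly `K_{p,q}`-saturated
`n × n` bipartite graph. -/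
noncomputable def Wbip (n p q : ℕ) : ℕ :=
  sInf {m | ∃ E : Finset (Fin n × Fin n), WeakSatBip n p q E ∧ E.card = m}


open Finset Module Matrix

/-- The moment map: coefficient vectors to their first `m` power-sum moments. -/
noncomputable def momMap (n m : ℕ) : (Fin n → ℚ) →ₗ[ℚ] (Fin m → ℚ) :=
  (Matrix.of fun (d : Fin m) (j : Fin n) => ((j : ℕ) : ℚ) ^ (d : ℕ)).mulVecLin

lemma momMap_apply {n m : ℕ} (v : Fin n → ℚ) (d : Fin m) :
    momMap n m v d = ∑ j : Fin n, ((j : ℕ) : ℚ) ^ (d : ℕ) * v j := rfl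

lemma vand_det_ne {m : ℕ} :
    (Matrix.vandermonde fun e : Fin m => ((e : ℕ) : ℚ)).det ≠ 0 := by
  rw [Matrix.det_vandermonde]
  refine Finset.prod_ne_zero_iff.2 fun i _ => Finset.prod_ne_zero_iff.2 fun j hj => ?_
  have h0 : i < j := Finset.mem_Ioi.1 hj
  have h1 : (i : ℕ) < (j : ℕ) := h0
  have h2 : ((i : ℕ) : ℚ) < ((j : ℕ) : ℚ) := by exact_mod_cast h1
  exact sub_ne_zero.2 (ne_of_gt h2)

lemma momMap_surjective {n m : ℕ} (hmn : m ≤ n) : Function.Surjective (momMap n m) := by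
  intro t
  set A : Matrix (Fin m) (Fin m) ℚ :=
    (Matrix.vandermonde fun e : Fin m => ((e : ℕ) : ℚ))ᵀ with hA
  have hdet : IsUnit A.det := by
    rw [hA, Matrix.det_transpose]
    exact isUnit_iff_ne_zero.2 vand_det_ne
  set s : Fin m → ℚ := A⁻¹.mulVec t with hs
  refine ⟨fun j => if h : (j : ℕ) < m then s ⟨j, h⟩ else 0, ?_⟩
  funext d
  rw [momMap_apply]
  have hsum : ∑ j : Fin n, ((j : ℕ) : ℚ) ^ (d : ℕ) *
      (if h : (j : ℕ) < m then s ⟨j, h⟩ else 0) = ∑ e : Fin m, A d e * s e := by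
    rw [← Finset.sum_filter_of_ne (p := fun j : Fin n => (j : ℕ) < m)
      (fun x _ hx => by by_contra h; rw [dif_neg h, mul_zero] at hx; exact hx rfl)]
    refine Finset.sum_bij' (fun j hj => (⟨(j : ℕ), (Finset.mem_filter.1 hj).2⟩ : Fin m))
      (fun e _ => Fin.castLE hmn e) ?_ ?_ ?_ ?_ ?_
    · intro a ha; exact Finset.mem_univ _
    · intro e _
      exact Finset.mem_filter.2 ⟨Finset.mem_univ _, by simp [Fin.castLE]⟩
    · intro a ha; ext; simp [Fin.castLE]
    · intro e _; ext; simp [Fin.castLE]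
    · intro a ha
      have hm := (Finset.mem_filter.1 ha).2
      rw [dif_pos hm]
      rw [hA]
      simp [Matrix.vandermonde, mul_comm]
  rw [hsum]
  have : A.mulVec s = t := by
    rw [hs, Matrix.mulVec_mulVec, Matrix.mul_nonsing_inv _ hdet, Matrix.one_mulVec]
  calc ∑ e : Fin m, A d e * s e = A.mulVec s d := rfl
    _ = t d := by rw [this]
open Polynomial Finset

lemma leadingCoeff_lagrange_basis {s : Finset (Fin n)} {v : Fin n → ℚ}
    (hv : Set.InjOn v s) {i : Fin n} (hi : i ∈ s) :
    (Lagrange.basis s v i).coeff (s.card - 1) =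
      ∏ j ∈ s.erase i, (v i - v j)⁻¹ := by
  have hdeg := Lagrange.degree_basis hv hi
  have hne : ∀ j ∈ s.erase i, v i ≠ v j := by
    intro j hj
    have hji := Finset.ne_of_mem_erase hj
    exact fun h => hji ((hv hi (Finset.mem_of_mem_erase hj) h)).symm
  have hlc : (Lagrange.basis s v i).leadingCoeff = ∏ j ∈ s.erase i, (v i - v j)⁻¹ := by
    rw [Lagrange.basis, Polynomial.leadingCoeff_prod]
    refine Finset.prod_congr rfl fun j hj => ?_
    rw [Lagrange.basisDivisor, Polynomial.leadingCoeff_mul, Polynomial.leadingCoeff_C,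
      Polynomial.leadingCoeff_X_sub_C, mul_one]
  have hnd : (Lagrange.basis s v i).natDegree = s.card - 1 :=
    Polynomial.natDegree_eq_of_degree_eq_some hdeg
  rw [← hnd, ← Polynomial.leadingCoeff, hlc]

/-- The key Lagrange identity: weights of low-degree moments vanish. -/
lemma lagrange_moment_zero {n : ℕ} {s : Finset (Fin n)} {v : Fin n → ℚ}
    (hv : Set.InjOn v s) {d : ℕ} (hd : d < s.card - 1) :
    ∑ i ∈ s, (v i) ^ d * (∏ j ∈ s.erase i, (v i - v j))⁻¹ = 0 := by
  have hcard : 1 ≤ s.card := by omega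
  have hdeg : (X ^ d : ℚ[X]).degree < s.card := by
    rw [Polynomial.degree_X_pow]
    exact_mod_cast by omega
  have h := Lagrange.eq_interpolate (f := (X ^ d : ℚ[X])) hv hdeg
  have hc := congrArg (fun f : ℚ[X] => f.coeff (s.card - 1)) h
  simp only [Lagrange.interpolate_apply] at hc
  rw [Polynomial.coeff_X_pow] at hc
  rw [if_neg (by omega)] at hc
  rw [Polynomial.finset_sum_coeff] at hc
  have : ∀ i ∈ s, (Polynomial.C (Polynomial.eval (v i) (X ^ d : ℚ[X])) * Lagrange.basis s v i).coeff (s.card - 1)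
      = (v i) ^ d * (∏ j ∈ s.erase i, (v i - v j))⁻¹ := by
    intro i hi
    rw [Polynomial.coeff_C_mul, leadingCoeff_lagrange_basis hv hi]
    simp [Finset.prod_inv_distrib]
  rw [Finset.sum_congr rfl this] at hc
  exact hc.symm

noncomputable def momKer (n m : ℕ) : Submodule ℚ (Fin n → ℚ) := LinearMap.ker (momMap n m)

lemma finrank_momKer {n m : ℕ} (hmn : m ≤ n) :
    Module.finrank ℚ (momKer n m) = n - m := by
  unfold momKer
  have h := LinearMap.finrank_range_add_finrank_ker (momMap n m)
  rw [LinearMap.range_eq_top.2 (momMap_surjective hmn)] at h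
  rw [finrank_top, Module.finrank_fintype_fun_eq_card, Module.finrank_fintype_fun_eq_card,
    Fintype.card_fin, Fintype.card_fin] at h
  omega

lemma momKer_mono {n m m' : ℕ} (h : m' ≤ m) : momKer n m ≤ momKer n m' := by
  intro v hv
  have hv' : momMap n m v = 0 := hv
  have : momMap n m' v = 0 := by
    funext d
    have := congrFun hv' (Fin.castLE h d)
    simpa [momMap_apply] using this
  exact this

/-- The Lagrange weight vector supported on `S`. -/
noncomputable def lagW {n : ℕ} (S : Finset (Fin n)) : Fin n → ℚ :=
  fun i => if i ∈ S then (∏ j ∈ S.erase i, (((i : ℕ) : ℚ) - ((j : ℕ) : ℚ)))⁻¹ else 0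

lemma natCast_fin_injOn {n : ℕ} (S : Finset (Fin n)) :
    Set.InjOn (fun i : Fin n => ((i : ℕ) : ℚ)) S := by
  intro a _ b _ h
  have h' : ((a : ℕ) : ℚ) = ((b : ℕ) : ℚ) := h
  have : (a : ℕ) = (b : ℕ) := by exact_mod_cast h'
  exact Fin.ext this

lemma lagW_ne_zero {n : ℕ} {S : Finset (Fin n)} {i : Fin n} (hi : i ∈ S) :
    lagW S i ≠ 0 := by
  rw [lagW, if_pos hi]
  refine inv_ne_zero (Finset.prod_ne_zero_iff.2 fun j hj => sub_ne_zero.2 ?_)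
  have hji : j ≠ i := Finset.ne_of_mem_erase hj
  intro h
  exact hji (Fin.ext (by exact_mod_cast h)).symm

lemma lagW_zero {n : ℕ} {S : Finset (Fin n)} {i : Fin n} (hi : i ∉ S) :
    lagW S i = 0 := if_neg hi

lemma lagW_mem_momKer {n m : ℕ} {S : Finset (Fin n)} (hm : m ≤ S.card - 1) :
    lagW S ∈ momKer n m := by
  have : momMap n m (lagW S) = 0 := by
    funext d
    rw [momMap_apply]
    have hz : ∀ j ∈ (Finset.univ : Finset (Fin n)), j ∉ S →
        ((j : ℕ) : ℚ) ^ (d : ℕ) * lagW S j = 0 := by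
      intro j _ hj; rw [lagW_zero hj, mul_zero]
    rw [← Finset.sum_subset (Finset.subset_univ S) hz]
    rw [show (∑ i ∈ S, ((i : ℕ) : ℚ) ^ (d : ℕ) * lagW S i) =
        ∑ i ∈ S, ((i : ℕ) : ℚ) ^ (d : ℕ) *
          (∏ j ∈ S.erase i, (((i : ℕ) : ℚ) - ((j : ℕ) : ℚ)))⁻¹ from
      Finset.sum_congr rfl fun i hi => by rw [lagW, if_pos hi]]
    exact lagrange_moment_zero (natCast_fin_injOn S) (by have := d.2; omega)
  exact this

/-- Outer product of two vectors, as a bilinear map. -/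
noncomputable def otimes {n : ℕ} :
    (Fin n → ℚ) →ₗ[ℚ] (Fin n → ℚ) →ₗ[ℚ] (Fin n × Fin n → ℚ) :=
  LinearMap.mk₂ ℚ (fun x y e => x e.1 * y e.2)
    (fun x x' y => by funext e; simp [add_mul])
    (fun c x y => by funext e; simp [mul_assoc])
    (fun x y y' => by funext e; simp [mul_add])
    (fun c x y => by funext e; simp; ring)

lemma otimes_apply {n : ℕ} (x y : Fin n → ℚ) (e : Fin n × Fin n) :
    otimes x y e = x e.1 * y e.2 := rfl

/-- The span of all outer products of vectors from `A` and `B`. -/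
noncomputable def tensSub {n : ℕ} (A B : Submodule ℚ (Fin n → ℚ)) :
    Submodule ℚ (Fin n × Fin n → ℚ) :=
  Submodule.span ℚ (Set.image2 (fun x y => otimes x y) (A : Set (Fin n → ℚ)) B)

lemma otimes_mem_tensSub {n : ℕ} {A B : Submodule ℚ (Fin n → ℚ)}
    {x y : Fin n → ℚ} (hx : x ∈ A) (hy : y ∈ B) : otimes x y ∈ tensSub A B :=
  Submodule.subset_span (Set.mem_image2_of_mem hx hy)

lemma tensSub_mono {n : ℕ} {A A' B B' : Submodule ℚ (Fin n → ℚ)}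
    (hA : A ≤ A') (hB : B ≤ B') : tensSub A B ≤ tensSub A' B' :=
  Submodule.span_mono (Set.image2_subset hA hB)

lemma finrank_tensSub_le {n : ℕ} (A B : Submodule ℚ (Fin n → ℚ)) :
    Module.finrank ℚ (tensSub A B) ≤ Module.finrank ℚ A * Module.finrank ℚ B := by
  classical
  set bA := Module.finBasis ℚ A with hbA
  set bB := Module.finBasis ℚ B with hbB
  set F : Fin (Module.finrank ℚ A) × Fin (Module.finrank ℚ B) → (Fin n × Fin n → ℚ) :=
    fun ij => otimes (bA ij.1 : Fin n → ℚ) (bB ij.2 : Fin n → ℚ) with hF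
  have hspan : tensSub A B ≤ Submodule.span ℚ (Set.range F) := by
    rw [tensSub, Submodule.span_le]
    rintro u ⟨x, hx, y, hy, rfl⟩
    have hxr : (⟨x, hx⟩ : A) = ∑ i, bA.repr ⟨x, hx⟩ i • bA i := (bA.sum_repr ⟨x, hx⟩).symm
    have hyr : (⟨y, hy⟩ : B) = ∑ j, bB.repr ⟨y, hy⟩ j • bB j := (bB.sum_repr ⟨y, hy⟩).symm
    have hx' : x = ∑ i, bA.repr ⟨x, hx⟩ i • (bA i : Fin n → ℚ) := by
      have := congrArg (Submodule.subtype A) hxr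
      rw [map_sum] at this
      simp only [map_smul, Submodule.subtype_apply] at this
      exact this
    have hy' : y = ∑ j, bB.repr ⟨y, hy⟩ j • (bB j : Fin n → ℚ) := by
      have := congrArg (Submodule.subtype B) hyr
      rw [map_sum] at this
      simp only [map_smul, Submodule.subtype_apply] at this
      exact this
    rw [hx', hy']
    show otimes _ _ ∈ _
    rw [map_sum]
    refine Submodule.sum_mem _ fun j _ => ?_
    rw [(otimes _).map_smul]
    refine Submodule.smul_mem _ _ ?_
    rw [map_sum, LinearMap.sum_apply]
    refine Submodule.sum_mem _ fun i _ => ?_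
    rw [_root_.map_smul, LinearMap.smul_apply]
    refine Submodule.smul_mem _ _ ?_
    exact Submodule.subset_span ⟨(i, j), rfl⟩
  calc Module.finrank ℚ (tensSub A B) ≤ Module.finrank ℚ (Submodule.span ℚ (Set.range F)) :=
        Submodule.finrank_mono hspan
    _ ≤ (Finset.univ.image F).card := by
        rw [show Set.range F = ↑(Finset.univ.image F) by simp]
        exact finrank_span_finset_le_card _
    _ ≤ Fintype.card (Fin (Module.finrank ℚ A) × Fin (Module.finrank ℚ B)) :=
        Finset.card_image_le.trans (by simp)
    _ = Module.finrank ℚ A * Module.finrank ℚ B := by simp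

lemma otimes_linearIndependent {n : ℕ} {ι κ : Type} [Fintype ι] [Fintype κ]
    {f : ι → Fin n → ℚ} {g : κ → Fin n → ℚ}
    (hf : LinearIndependent ℚ f) (hg : LinearIndependent ℚ g) :
    LinearIndependent ℚ (fun ij : ι × κ => otimes (f ij.1) (g ij.2)) := by
  rw [Fintype.linearIndependent_iff]
  intro c hc
  have hval : ∀ b : Fin n, ∀ i : ι, (∑ j, c (i, j) * g j b) = 0 := by
    intro b
    have hsum : ∑ i, (∑ j, c (i, j) * g j b) • f i = 0 := by
      funext a
      have h := congrFun hc (a, b)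
      rw [Finset.sum_apply] at h
      simp only [Pi.smul_apply, Pi.zero_apply, smul_eq_mul, otimes_apply] at h
      rw [Finset.sum_apply]
      simp only [Pi.smul_apply, smul_eq_mul, Pi.zero_apply]
      rw [← h]
      rw [← Finset.univ_product_univ, Finset.sum_product]
      refine Finset.sum_congr rfl fun i _ => ?_
      rw [Finset.sum_mul]
      exact Finset.sum_congr rfl fun j _ => by ring
    exact (Fintype.linearIndependent_iff.1 hf) _ hsum
  intro ij
  have hzero : ∀ i : ι, ∑ j, c (i, j) • g j = 0 := by
    intro i
    funext b
    rw [Finset.sum_apply]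
    simpa using hval b i
  exact (Fintype.linearIndependent_iff.1 hg) _ (hzero ij.1) ij.2


/-- Decomposition of an outer product supported on `S × T` in terms of
standard basis vectors. -/
lemma otimes_eq_sum {n : ℕ} (S T : Finset (Fin n)) (x y : Fin n → ℚ)
    (hxS : ∀ i, i ∉ S → x i = 0) (hyT : ∀ j, j ∉ T → y j = 0) :
    otimes x y = ∑ e ∈ S ×ˢ T, (x e.1 * y e.2) •
      (Pi.single e (1 : ℚ) : Fin n × Fin n → ℚ) := by
  funext e'
  rw [Finset.sum_apply]
  have : ∀ e ∈ S ×ˢ T, ((x e.1 * y e.2) •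
      (Pi.single e (1 : ℚ) : Fin n × Fin n → ℚ)) e' =
      if e = e' then x e'.1 * y e'.2 else 0 := by
    intro e _
    by_cases h : e = e'
    · subst h; simp [Pi.single_apply]
    · simp [Pi.single_apply, h, Ne.symm h]
  rw [Finset.sum_congr rfl this, Finset.sum_ite_eq']
  rw [otimes_apply]
  by_cases h : e' ∈ S ×ˢ T
  · rw [if_pos h]
  · rw [if_neg h]
    rcases (by rwa [Finset.mem_product, not_and_or] at h : e'.1 ∉ S ∨ e'.2 ∉ T) with h1 | h2
    · rw [hxS _ h1, zero_mul]
    · rw [hyT _ h2, mul_zero]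

/-- Key step: if an outer product supported on `S ×ˢ T` with full support lies
in `U`, and all elements of `S ×ˢ T` except `e₀` map into a span, then the
class of `e₀` lies in that span as well. -/
lemma key_step {n : ℕ} (U : Submodule ℚ (Fin n × Fin n → ℚ))
    (S T : Finset (Fin n)) (x y : Fin n → ℚ)
    (hxS0 : ∀ i, i ∉ S → x i = 0) (hyT0 : ∀ j, j ∉ T → y j = 0)
    (hxS : ∀ i ∈ S, x i ≠ 0) (hyT : ∀ j ∈ T, y j ≠ 0)
    (hU : otimes x y ∈ U)
    (e₀ : Fin n × Fin n) (he₀ : e₀ ∈ S ×ˢ T)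
    (F : Finset (Fin n × Fin n)) (hF : ∀ e ∈ S ×ˢ T, e ≠ e₀ → e ∈ F) :
    U.mkQ (Pi.single e₀ 1) ∈
      Submodule.span ℚ ((fun e => U.mkQ (Pi.single e (1 : ℚ))) '' ↑F) := by
  have hdecomp := otimes_eq_sum S T x y hxS0 hyT0
  have hzero : ∑ e ∈ S ×ˢ T, (x e.1 * y e.2) • U.mkQ (Pi.single e (1 : ℚ)) = 0 := by
    have h1 : U.mkQ (otimes x y) = 0 := (Submodule.Quotient.mk_eq_zero U).2 hU
    rw [hdecomp, map_sum] at h1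
    simpa using h1
  rw [← Finset.add_sum_erase _ _ he₀] at hzero
  have hc : x e₀.1 * y e₀.2 ≠ 0 :=
    mul_ne_zero (hxS e₀.1 (Finset.mem_product.1 he₀).1) (hyT e₀.2 (Finset.mem_product.1 he₀).2)
  have h3 : (x e₀.1 * y e₀.2) • U.mkQ (Pi.single e₀ 1) =
      -∑ e ∈ (S ×ˢ T).erase e₀, (x e.1 * y e.2) • U.mkQ (Pi.single e (1 : ℚ)) :=
    eq_neg_of_add_eq_zero_left hzero
  have h4 := congrArg (fun z => (x e₀.1 * y e₀.2)⁻¹ • z) h3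
  simp only [smul_smul, inv_mul_cancel₀ hc, one_smul, smul_neg] at h4
  rw [h4]
  refine Submodule.neg_mem _ (Submodule.smul_mem _ _ (Submodule.sum_mem _ fun e he => ?_))
  refine Submodule.smul_mem _ _ (Submodule.subset_span ?_)
  exact ⟨e, hF e (Finset.mem_of_mem_erase he) (Finset.ne_of_mem_erase he), rfl⟩

lemma lower_bound {n p q : ℕ} (hp : 1 ≤ p) (hpq : p ≤ q) (hqn : q ≤ n)
    (E : Finset (Fin n × Fin n)) (hE : WeakSatBip n p q E) :
    n ^ 2 - (n - p + 1) ^ 2 + (q - p) ^ 2 ≤ E.card := by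
  classical
  set K := momKer n (p - 1) with hK
  set L := momKer n (q - 1) with hL
  have hLK : L ≤ K := momKer_mono (by omega)
  set U := tensSub K L ⊔ tensSub L K with hUdef
  -- dimension bound on U
  have ha : Module.finrank ℚ K = n - (p - 1) := finrank_momKer (by omega)
  have hb : Module.finrank ℚ L = n - (q - 1) := finrank_momKer (by omega)
  have hU1 : Module.finrank ℚ (tensSub K L) ≤ (n - (p - 1)) * (n - (q - 1)) := by
    rw [← ha, ← hb]; exact finrank_tensSub_le K L
  have hU2 : Module.finrank ℚ (tensSub L K) ≤ (n - (q - 1)) * (n - (p - 1)) := by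
    rw [← ha, ← hb]; exact finrank_tensSub_le L K
  have hInt : (n - (q - 1)) * (n - (q - 1)) ≤
      Module.finrank ℚ (tensSub K L ⊓ tensSub L K : Submodule ℚ (Fin n × Fin n → ℚ)) := by
    set bL := Module.finBasis ℚ L with hbL
    have hf : LinearIndependent ℚ (fun i => (bL i : Fin n → ℚ)) :=
      bL.linearIndependent.map' L.subtype (Submodule.ker_subtype L)
    have hind := otimes_linearIndependent hf hf
    have hmem : ∀ ij : Fin (Module.finrank ℚ L) × Fin (Module.finrank ℚ L),
        otimes (bL ij.1 : Fin n → ℚ) (bL ij.2 : Fin n → ℚ) ∈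
          (tensSub K L ⊓ tensSub L K : Submodule ℚ (Fin n × Fin n → ℚ)) := by
      intro ij
      exact Submodule.mem_inf.2 ⟨otimes_mem_tensSub (hLK (bL ij.1).2) (bL ij.2).2,
        otimes_mem_tensSub (bL ij.1).2 (hLK (bL ij.2).2)⟩
    set G : Fin (Module.finrank ℚ L) × Fin (Module.finrank ℚ L) →
        (tensSub K L ⊓ tensSub L K : Submodule ℚ (Fin n × Fin n → ℚ)) :=
      fun ij => ⟨otimes (bL ij.1 : Fin n → ℚ) (bL ij.2 : Fin n → ℚ), hmem ij⟩ with hG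
    have hindG : LinearIndependent ℚ G := by
      apply LinearIndependent.of_comp
        (tensSub K L ⊓ tensSub L K : Submodule ℚ (Fin n × Fin n → ℚ)).subtype
      exact hind
    have := hindG.fintype_card_le_finrank
    simpa [hb] using this
  have hsupinf := Submodule.finrank_sup_add_finrank_inf_eq (tensSub K L) (tensSub L K)
  have hUdim : Module.finrank ℚ U ≤ (n - p + 1) ^ 2 - (q - p) ^ 2 := by
    set a := n - (p - 1) with hadef
    set b := n - (q - 1) with hbdef
    obtain ⟨d, hd⟩ : ∃ d, a = b + d := ⟨a - b, by omega⟩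
    have h3 : a * b = b * b + b * d := by rw [hd]; ring
    have h4 : b * a = b * b + b * d := by rw [hd]; ring
    have h5 : a ^ 2 = d ^ 2 + (b * b + 2 * (b * d)) := by rw [hd]; ring
    have h6 : d ^ 2 = d * d := sq d
    have hgoal : Module.finrank ℚ U + d ^ 2 ≤ a ^ 2 := by
      have hU' : Module.finrank ℚ U = Module.finrank ℚ
          (tensSub K L ⊔ tensSub L K : Submodule ℚ (Fin n × Fin n → ℚ)) := rfl
      rw [hU']
      linarith [hsupinf, hInt, hU1, hU2, h3, h4, h5]
    have hres := Nat.le_sub_of_add_le hgoal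
    have e1 : a = n - p + 1 := by omega
    have e2 : d = q - p := by omega
    rwa [e1, e2] at hres
  -- quotient dimension
  have hquot := Submodule.finrank_quotient_add_finrank U
  have hamb : Module.finrank ℚ (Fin n × Fin n → ℚ) = n ^ 2 := by
    rw [Module.finrank_fintype_fun_eq_card]
    simp [sq]
  -- the quotient classes of standard basis vectors
  set φ : Fin n × Fin n → ((Fin n × Fin n → ℚ) ⧸ U) :=
    fun e => U.mkQ (Pi.single e (1 : ℚ)) with hφ
  obtain ⟨l, hnd, hlm, hsat⟩ := hE
  have hstep : ∀ k : ℕ,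
      Submodule.span ℚ (φ '' ↑(E ∪ (l.take (k + 1)).toFinset)) ≤
        Submodule.span ℚ (φ '' ↑(E ∪ (l.take k).toFinset)) := by
    intro k
    by_cases hk : k < l.length
    · rw [Submodule.span_le]
      rintro _ ⟨e, he, rfl⟩
      have htk : l.take (k + 1) = l.take k ++ [l.get ⟨k, hk⟩] := by
        rw [List.take_succ, List.getElem?_eq_getElem hk]
        simp [List.get_eq_getElem]
      by_cases heF : e ∈ E ∪ (l.take k).toFinset
      · exact Submodule.subset_span ⟨e, heF, rfl⟩
      · have hee : e = l.get ⟨k, hk⟩ := by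
          simp only [Finset.coe_union, Set.mem_union, Finset.mem_coe,
            List.coe_toFinset, Set.mem_setOf_eq, htk, List.mem_append,
            List.mem_singleton] at he
          simp only [Finset.mem_union, List.mem_toFinset] at heF
          tauto
        subst hee
        obtain ⟨S, T, hKpq, hmemST, hsub⟩ := hsat ⟨k, hk⟩
        have hsub' : ∀ e' ∈ S ×ˢ T, e' ≠ l.get ⟨k, hk⟩ →
            e' ∈ E ∪ (l.take k).toFinset := by
          intro e' he' hne
          have := hsub he'
          simp only [Finset.mem_union, List.mem_toFinset, htk, List.mem_append,
            List.mem_singleton] at this ⊢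
          tauto
        rcases hKpq with ⟨hSp, hTq⟩ | ⟨hSq, hTp⟩
        · refine key_step U S T (lagW S) (lagW T)
            (fun i hi => lagW_zero hi) (fun j hj => lagW_zero hj)
            (fun i hi => lagW_ne_zero hi) (fun j hj => lagW_ne_zero hj)
            ?_ _ hmemST _ hsub'
          exact le_sup_left (α := Submodule ℚ (Fin n × Fin n → ℚ))
            (otimes_mem_tensSub (lagW_mem_momKer (by omega)) (lagW_mem_momKer (by omega)))
        · refine key_step U S T (lagW S) (lagW T)
            (fun i hi => lagW_zero hi) (fun j hj => lagW_zero hj)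
            (fun i hi => lagW_ne_zero hi) (fun j hj => lagW_ne_zero hj)
            ?_ _ hmemST _ hsub'
          exact le_sup_right (α := Submodule ℚ (Fin n × Fin n → ℚ))
            (otimes_mem_tensSub (lagW_mem_momKer (by omega)) (lagW_mem_momKer (by omega)))
    · have h1 : l.take (k + 1) = l.take k := by
        rw [List.take_of_length_le (by omega), List.take_of_length_le (by omega)]
      rw [h1]
  have hEk : ∀ k : ℕ,
      Submodule.span ℚ (φ '' ↑(E ∪ (l.take k).toFinset)) ≤
        Submodule.span ℚ (φ '' ↑E) := by
    intro k
    induction k with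
    | zero => simp
    | succ k ih => exact (hstep k).trans ih
  have htop : Submodule.span ℚ (φ '' ↑(E ∪ (l.take l.length).toFinset)) = ⊤ := by
    have huniv : E ∪ (l.take l.length).toFinset = Finset.univ := by
      rw [List.take_length]
      ext e
      simp only [Finset.mem_union, List.mem_toFinset, Finset.mem_univ, iff_true]
      by_cases h : e ∈ E
      · exact Or.inl h
      · exact Or.inr ((hlm e).2 h)
    rw [huniv, Finset.coe_univ, Set.image_univ]
    rw [show Set.range φ = U.mkQ '' Set.range (fun e => Pi.single e (1 : ℚ)) from
      Set.range_comp _ _]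
    rw [Submodule.span_image]
    rw [show (fun e : Fin n × Fin n => Pi.single e (1 : ℚ)) =
      ⇑(Pi.basisFun ℚ (Fin n × Fin n)) from funext fun e => (Pi.basisFun_apply ℚ _ e).symm]
    rw [Basis.span_eq, Submodule.map_top, Submodule.range_mkQ]
  have hspanE : Submodule.span ℚ (φ '' ↑E) = ⊤ :=
    le_antisymm le_top (htop ▸ hEk l.length)
  have hcard : Module.finrank ℚ ((Fin n × Fin n → ℚ) ⧸ U) ≤ E.card := by
    have h1 : φ '' ↑E = ↑(E.image φ) := (Finset.coe_image).symm
    have h2 := finrank_span_finset_le_card (R := ℚ) (E.image φ)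
    unfold Set.finrank at h2
    rw [h1] at hspanE
    rw [hspanE] at h2
    rw [finrank_top] at h2
    exact h2.trans (Finset.card_image_le)
  -- put it together
  have hBA : (q - p) ^ 2 ≤ (n - p + 1) ^ 2 := Nat.pow_le_pow_left (by omega) 2
  have hAN : (n - p + 1) ^ 2 ≤ n ^ 2 := Nat.pow_le_pow_left (by omega) 2
  rw [hamb] at hquot
  set A := (n - p + 1) ^ 2
  set B := (q - p) ^ 2
  set N := n ^ 2
  omega


open Finset

def lowF (n b : ℕ) : Finset (Fin n) := Finset.univ.filter (fun x => x.val < b)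

lemma mem_lowF {n b : ℕ} {x : Fin n} : x ∈ lowF n b ↔ x.val < b := by
  simp [lowF]

lemma card_lowF {n b : ℕ} (h : b ≤ n) : (lowF n b).card = b := by
  conv_rhs => rw [← Finset.card_range b]
  apply Finset.card_bij (fun x _ => x.val)
  · intro a ha; simpa using (mem_lowF.1 ha)
  · intro a _ b _ hab; exact Fin.ext hab
  · intro y hy
    have hyb : y < b := Finset.mem_range.1 hy
    exact ⟨⟨y, lt_of_lt_of_le hyb h⟩, mem_lowF.2 hyb, rfl⟩

def geF (n a : ℕ) : Finset (Fin n) := Finset.univ.filter (fun x => a ≤ x.val)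

lemma mem_geF {n a : ℕ} {x : Fin n} : x ∈ geF n a ↔ a ≤ x.val := by simp [geF]

lemma card_geF {n a : ℕ} (h : a ≤ n) : (geF n a).card = n - a := by
  conv_rhs => rw [← Nat.card_Ico a n]
  apply Finset.card_bij (fun x _ => x.val)
  · intro x hx; exact Finset.mem_Ico.2 ⟨mem_geF.1 hx, x.2⟩
  · intro a _ b _ hab; exact Fin.ext hab
  · intro y hy
    rcases Finset.mem_Ico.1 hy with ⟨h1, h2⟩
    exact ⟨⟨y, h2⟩, mem_geF.2 h1, rfl⟩

def midF (n a b : ℕ) : Finset (Fin n) := Finset.univ.filter (fun x => a ≤ x.val ∧ x.val < b)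

lemma mem_midF {n a b : ℕ} {x : Fin n} : x ∈ midF n a b ↔ a ≤ x.val ∧ x.val < b := by
  simp [midF]

lemma card_midF {n a b : ℕ} (h : b ≤ n) : (midF n a b).card = b - a := by
  conv_rhs => rw [← Nat.card_Ico a b]
  apply Finset.card_bij (fun x _ => x.val)
  · intro x hx; exact Finset.mem_Ico.2 (mem_midF.1 hx)
  · intro a _ b _ hab; exact Fin.ext hab
  · intro y hy
    rcases Finset.mem_Ico.1 hy with ⟨h1, h2⟩
    exact ⟨⟨y, lt_of_lt_of_le h2 h⟩, mem_midF.2 ⟨h1, h2⟩, rfl⟩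

/-- The non-edges of the construction. -/
def DD (n p q : ℕ) : Finset (Fin n × Fin n) :=
  Finset.univ.filter (fun e : Fin n × Fin n =>
    p - 1 ≤ e.1.val ∧ p - 1 ≤ e.2.val ∧ (q - 1 ≤ e.1.val ∨ q - 1 ≤ e.2.val))

/-- The edge set of the construction. -/
def EE (n p q : ℕ) : Finset (Fin n × Fin n) := Finset.univ \ DD n p q

lemma mem_DD {n p q : ℕ} {e : Fin n × Fin n} : e ∈ DD n p q ↔
    p - 1 ≤ e.1.val ∧ p - 1 ≤ e.2.val ∧ (q - 1 ≤ e.1.val ∨ q - 1 ≤ e.2.val) := by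
  simp [DD]

lemma mem_EE {n p q : ℕ} {e : Fin n × Fin n} : e ∈ EE n p q ↔
    ¬(p - 1 ≤ e.1.val ∧ p - 1 ≤ e.2.val ∧ (q - 1 ≤ e.1.val ∨ q - 1 ≤ e.2.val)) := by
  simp [EE, mem_DD]

lemma card_DD {n p q : ℕ} (hp : 1 ≤ p) (hpq : p ≤ q) (hqn : q ≤ n) :
    (DD n p q).card = (n - (p - 1)) * (n - (p - 1)) - (q - p) * (q - p) := by
  have hDD : DD n p q = (geF n (p - 1)) ×ˢ (geF n (p - 1)) \
      (midF n (p - 1) (q - 1)) ×ˢ (midF n (p - 1) (q - 1)) := by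
    ext e
    simp only [mem_DD, Finset.mem_sdiff, Finset.mem_product, mem_geF, mem_midF]
    omega
  rw [hDD, Finset.card_sdiff_of_subset]
  · rw [Finset.card_product, Finset.card_product, card_geF (by omega), card_midF (by omega)]
    have : q - 1 - (p - 1) = q - p := by omega
    rw [this]
  · refine Finset.product_subset_product ?_ ?_ <;>
      · intro x hx
        rw [mem_geF]
        exact (mem_midF.1 hx).1

lemma card_EE {n p q : ℕ} (hp : 1 ≤ p) (hpq : p ≤ q) (hqn : q ≤ n) :
    (EE n p q).card = n ^ 2 - (n - p + 1) ^ 2 + (q - p) ^ 2 := by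
  rw [EE, Finset.card_sdiff_of_subset (Finset.subset_univ _), card_DD hp hpq hqn]
  have h1 : (Finset.univ : Finset (Fin n × Fin n)).card = n * n := by
    rw [Finset.card_univ, Fintype.card_prod, Fintype.card_fin]
  rw [h1]
  have e1 : n - (p - 1) = n - p + 1 := by omega
  rw [e1]
  have h2 : (q - p) * (q - p) ≤ (n - p + 1) * (n - p + 1) :=
    Nat.mul_le_mul (by omega) (by omega)
  have h3 : (n - p + 1) * (n - p + 1) ≤ n * n := Nat.mul_le_mul (by omega) (by omega)
  have e2 : (n - p + 1) ^ 2 = (n - p + 1) * (n - p + 1) := sq _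
  have e3 : (q - p) ^ 2 = (q - p) * (q - p) := sq _
  have e4 : n ^ 2 = n * n := sq n
  rw [e2, e3, e4]
  omega

lemma get_mem_take {α : Type*} (l : List α) (k : Fin l.length) :
    l.get k ∈ l.take ((k : ℕ) + 1) := by
  have h1 : (k : ℕ) < (l.take ((k : ℕ) + 1)).length := by
    simp only [List.length_take]; omega
  have h2 : (l.take ((k : ℕ) + 1))[(k : ℕ)]'h1 = l.get k := by
    rw [List.getElem_take]; simp [List.get_eq_getElem]
  rw [← h2]; exact List.getElem_mem h1

lemma mem_prefix_take {α : Type*} (l₁ l₂ : List α) (k : ℕ) (hk : l₁.length ≤ k)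
    (x : α) (hx : x ∈ l₁) : x ∈ (l₁ ++ l₂).take (k + 1) := by
  rw [List.take_append]
  exact List.mem_append_left _ (by rwa [List.take_of_length_le (by omega)])

def D1 (n p q : ℕ) : Finset (Fin n × Fin n) :=
  (DD n p q).filter (fun e => e.1.val < q - 1 ∨ e.2.val < q - 1)

def D2 (n p q : ℕ) : Finset (Fin n × Fin n) :=
  (DD n p q).filter (fun e => q - 1 ≤ e.1.val ∧ q - 1 ≤ e.2.val)

noncomputable def ll (n p q : ℕ) : List (Fin n × Fin n) := (D1 n p q).toList ++ (D2 n p q).toList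

lemma mem_ll {n p q : ℕ} {e : Fin n × Fin n} : e ∈ ll n p q ↔ e ∈ DD n p q := by
  rw [ll, List.mem_append, Finset.mem_toList, Finset.mem_toList, D1, D2,
    Finset.mem_filter, Finset.mem_filter]
  constructor
  · rintro (⟨h, _⟩ | ⟨h, _⟩) <;> exact h
  · intro h
    by_cases hc : q - 1 ≤ e.1.val ∧ q - 1 ≤ e.2.val
    · exact Or.inr ⟨h, hc⟩
    · exact Or.inl ⟨h, by omega⟩

lemma nodup_ll {n p q : ℕ} : (ll n p q).Nodup := by
  refine List.Nodup.append (Finset.nodup_toList _) (Finset.nodup_toList _) ?_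
  intro e he1 he2
  rw [Finset.mem_toList, D1, Finset.mem_filter] at he1
  rw [Finset.mem_toList, D2, Finset.mem_filter] at he2
  omega

lemma sat_EE {n p q : ℕ} (hp : 1 ≤ p) (hpq : p ≤ q) (hqn : q ≤ n) :
    ∀ k : Fin (ll n p q).length, ∃ S T : Finset (Fin n),
      IsKpq p q S T ∧ (ll n p q).get k ∈ S ×ˢ T ∧
      (S ×ˢ T : Finset (Fin n × Fin n)) ⊆ EE n p q ∪ ((ll n p q).take ((k : ℕ) + 1)).toFinset := by
  intro k
  set e := (ll n p q).get k with he
  have heD : e ∈ DD n p q := mem_ll.1 (List.get_mem _ _)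
  rw [mem_DD] at heD
  have heTake : e ∈ ((ll n p q).take ((k : ℕ) + 1)).toFinset :=
    List.mem_toFinset.2 (get_mem_take _ k)
  by_cases hc : q - 1 ≤ e.2.val
  · -- T gets the q-side
    refine ⟨insert e.1 (lowF n (p - 1)), insert e.2 (lowF n (q - 1)), ?_, ?_, ?_⟩
    · left
      constructor
      · rw [Finset.card_insert_of_notMem (fun h => by have := mem_lowF.1 h; omega),
          card_lowF (by omega)]
        omega
      · rw [Finset.card_insert_of_notMem (fun h => by have := mem_lowF.1 h; omega),
          card_lowF (by omega)]
        omega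
    · exact Finset.mem_product.2 ⟨Finset.mem_insert_self _ _, Finset.mem_insert_self _ _⟩
    · rintro ⟨i, j⟩ hij
      rw [Finset.mem_product] at hij
      obtain ⟨hi, hj⟩ := hij
      dsimp only at hi hj
      rw [Finset.mem_insert] at hi hj
      rw [Finset.mem_union]
      rcases hi with hi | hi
      · rcases hj with hj | hj
        · subst hi; subst hj
          right
          exact heTake
        · -- j < q - 1
          have hjv := mem_lowF.1 hj
          by_cases hj2 : j.val < p - 1
          · left; rw [mem_EE]; subst hi; simp; omega
          · by_cases hi2 : q - 1 ≤ e.1.val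
            · -- (e.1, j) is a D1 edge added earlier; e must be in D2
              right
              rw [List.mem_toFinset]
              subst hi
              have hklen : (D1 n p q).toList.length ≤ (k : ℕ) := by
                by_contra hlt
                push_neg at hlt
                have hmem : e ∈ (D1 n p q).toList := by
                  have hgl : (ll n p q).get k = ((D1 n p q).toList)[(k : ℕ)]'hlt := by
                    rw [List.get_eq_getElem]
                    exact List.getElem_append_left hlt
                  rw [he, hgl]
                  exact List.getElem_mem hlt
                rw [Finset.mem_toList, D1, Finset.mem_filter] at hmem
                omega
              have hmem1 : (e.1, j) ∈ (D1 n p q).toList := by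
                rw [Finset.mem_toList, D1, Finset.mem_filter, mem_DD]
                dsimp only
                exact ⟨⟨by omega, by omega, Or.inl (by omega)⟩, Or.inr (by omega)⟩
              exact mem_prefix_take _ _ _ hklen _ hmem1
            · left; rw [mem_EE]; subst hi; simp; omega
      · left; rw [mem_EE]
        have hiv := mem_lowF.1 hi
        simp; omega
  · -- e.2 in the middle block, e.1 ≥ q-1
    have he1 : q - 1 ≤ e.1.val := by omega
    refine ⟨insert e.1 (lowF n (q - 1)), insert e.2 (lowF n (p - 1)), ?_, ?_, ?_⟩
    · right
      constructor
      · rw [Finset.card_insert_of_notMem (fun h => by have := mem_lowF.1 h; omega),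
          card_lowF (by omega)]
        omega
      · rw [Finset.card_insert_of_notMem (fun h => by have := mem_lowF.1 h; omega),
          card_lowF (by omega)]
        omega
    · exact Finset.mem_product.2 ⟨Finset.mem_insert_self _ _, Finset.mem_insert_self _ _⟩
    · rintro ⟨i, j⟩ hij
      rw [Finset.mem_product] at hij
      obtain ⟨hi, hj⟩ := hij
      dsimp only at hi hj
      rw [Finset.mem_insert] at hi hj
      rw [Finset.mem_union]
      rcases hj with hj | hj
      · rcases hi with hi | hi
        · subst hi; subst hj
          right
          exact heTake
        · have hiv := mem_lowF.1 hi
          left; rw [mem_EE]; subst hj; simp; omega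
      · left; rw [mem_EE]
        have hjv := mem_lowF.1 hj
        simp; omega


theorem Wbip_eq (n p q : ℕ) (hp : 1 ≤ p) (hpq : p ≤ q) (hqn : q ≤ n) :
    Wbip n p q = n ^ 2 - (n - p + 1) ^ 2 + (q - p) ^ 2 := by
  have hmemEE : ∀ e, e ∈ ll n p q ↔ e ∉ EE n p q := by
    intro e
    rw [mem_ll]
    simp [EE]
  have hWS : WeakSatBip n p q (EE n p q) :=
    ⟨ll n p q, nodup_ll, hmemEE, sat_EE hp hpq hqn⟩
  have hwit : (n ^ 2 - (n - p + 1) ^ 2 + (q - p) ^ 2) ∈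
      {m | ∃ E : Finset (Fin n × Fin n), WeakSatBip n p q E ∧ E.card = m} :=
    ⟨EE n p q, hWS, card_EE hp hpq hqn⟩
  apply le_antisymm
  · exact Nat.sInf_le hwit
  · apply le_csInf ⟨_, hwit⟩
    rintro m ⟨E, hE, rfl⟩
    exact lower_bound hp hpq hqn E hE
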